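/- Let X and Z be standard Borel spaces, let p and q be probability measures on X × Z with z-marginals p_z and q_z, let c_x : X × Z → ℝ be a bounded measurable function, let C_z : Z × Z → ℝ be a bounded measurable nonnegative cost on the latent space, and let λ ≥ 0. Then the Wasserstein-autoencoder objective decomposes as: inf_{γ ∈ Γ[p,q]} ∫ [ c_x(x₂, z₂) + λ C_z(z₁, z₂) ] dγ((x₁,z₁),(x₂,z₂)) = ∫ c_x(x,z) dq(x,z) + λ · inf_{γ_z ∈ Γ[p_z, q_z]} ∫ C_z(z₁,z₂) dγ_z(z₁,z₂). -/

import Mathlib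

open MeasureTheory
open scoped ProbabilityTheory

/-- The set of couplings `Γ[μ,ν]`: probability measures on `Y × Y` whose first marginal is `μ`
and whose second marginal is `ν`. -/
def couplings {Y : Type*} [MeasurableSpace Y] (μ ν : Measure Y) : Set (Measure (Y × Y)) :=
  {γ | IsProbabilityMeasure γ ∧ γ.map Prod.fst = μ ∧ γ.map Prod.snd = ν}

section Aux

variable {X Z : Type*} [MeasurableSpace X] [StandardBorelSpace X]
    [MeasurableSpace Z] [StandardBorelSpace Z]

lemma nonempty_of_prob {α : Type*} [MeasurableSpace α] (μ : Measure α)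
    [IsProbabilityMeasure μ] : Nonempty α := by
  by_contra h
  rw [not_nonempty_iff] at h
  have h1 := measure_univ (μ := μ)
  rw [μ.eq_zero_of_isEmpty] at h1
  simp at h1

lemma integrable_of_bdd {α : Type*} [MeasurableSpace α] (μ : Measure α) [IsFiniteMeasure μ]
    {f : α → ℝ} (hf : Measurable f) (M : ℝ) (h : ∀ x, |f x| ≤ M) : Integrable f μ :=
  (integrable_const M).mono' hf.aestronglyMeasurable
    (Filter.Eventually.of_forall fun x => by simpa [Real.norm_eq_abs] using h x)

/-- Key disintegration identity: for a probability measure `p` on `X × Z`, standard Borel `X`,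
`p s = ∫⁻ z, pk z {x | (x,z) ∈ s} ∂(p.map Prod.snd)` where `pk = (p.map Prod.swap).condKernel`. -/
lemma marginal_formula [Nonempty X] (p : Measure (X × Z)) [IsProbabilityMeasure p]
    {s : Set (X × Z)} (hs : MeasurableSet s) :
    p s = ∫⁻ z, (p.map Prod.swap).condKernel z (Prod.mk z ⁻¹' (Prod.swap ⁻¹' s))
        ∂(p.map Prod.snd) := by
  set P : Measure (Z × X) := p.map Prod.swap with hP
  haveI : IsProbabilityMeasure P := Measure.isProbabilityMeasure_map measurable_swap.aemeasurable
  have hfst : P.fst = p.map Prod.snd := by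
    rw [Measure.fst, hP, Measure.map_map measurable_fst measurable_swap]
    rfl
  have hp : p = P.map Prod.swap := by
    rw [hP, Measure.map_map measurable_swap measurable_swap]
    simp [Function.comp_def, Measure.map_id]
  calc p s = P.map Prod.swap s := by rw [← hp]
    _ = P (Prod.swap ⁻¹' s) := Measure.map_apply measurable_swap hs
    _ = (P.fst ⊗ₘ P.condKernel) (Prod.swap ⁻¹' s) := by rw [P.disintegrate P.condKernel]
    _ = ∫⁻ z, P.condKernel z (Prod.mk z ⁻¹' (Prod.swap ⁻¹' s)) ∂P.fst :=
        Measure.compProd_apply (measurable_swap hs)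
    _ = _ := by rw [hfst]

/-- The gluing lemma: any coupling of the latent marginals lifts to a coupling of `p` and `q`. -/
lemma gluing (p q : Measure (X × Z)) [IsProbabilityMeasure p] [IsProbabilityMeasure q]
    {γz : Measure (Z × Z)} (hγz : γz ∈ couplings (p.map Prod.snd) (q.map Prod.snd)) :
    ∃ γ ∈ couplings p q,
      γ.map (fun y : (X × Z) × (X × Z) => (y.1.2, y.2.2)) = γz := by
  obtain ⟨hγzP, hγz1, hγz2⟩ := hγz
  haveI := hγzP
  haveI : Nonempty (X × Z) := nonempty_of_prob p
  haveI : Nonempty X := (nonempty_prod.1 ‹Nonempty (X × Z)›).1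
  set pk := (p.map Prod.swap).condKernel with hpk
  set qk := (q.map Prod.swap).condKernel with hqk
  haveI : IsProbabilityMeasure (p.map Prod.swap) :=
    Measure.isProbabilityMeasure_map measurable_swap.aemeasurable
  haveI : IsProbabilityMeasure (q.map Prod.swap) :=
    Measure.isProbabilityMeasure_map measurable_swap.aemeasurable
  set η₁ : ProbabilityTheory.Kernel Z (X × Z) := pk ×ₖ ProbabilityTheory.Kernel.id with hη₁
  set η₂ : ProbabilityTheory.Kernel Z (X × Z) := qk ×ₖ ProbabilityTheory.Kernel.id with hη₂
  set κ : ProbabilityTheory.Kernel (Z × Z) ((X × Z) × (X × Z)) :=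
    (η₁.comap Prod.fst measurable_fst) ×ₖ (η₂.comap Prod.snd measurable_snd) with hκ
  have hκ_apply : ∀ zz : Z × Z, κ zz = (η₁ zz.1).prod (η₂ zz.2) := by
    intro zz
    rw [hκ, ProbabilityTheory.Kernel.prod_apply, ProbabilityTheory.Kernel.comap_apply,
      ProbabilityTheory.Kernel.comap_apply]
  have hη₁_apply : ∀ z : Z, η₁ z = (pk z).prod (Measure.dirac z) := by
    intro z
    rw [hη₁, ProbabilityTheory.Kernel.prod_apply, ProbabilityTheory.Kernel.id_apply]
  have hη₂_apply : ∀ z : Z, η₂ z = (qk z).prod (Measure.dirac z) := by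
    intro z
    rw [hη₂, ProbabilityTheory.Kernel.prod_apply, ProbabilityTheory.Kernel.id_apply]
  set γ : Measure ((X × Z) × (X × Z)) := γz.bind κ with hγ
  have hbind : ∀ {t : Set ((X × Z) × (X × Z))}, MeasurableSet t →
      γ t = ∫⁻ zz, κ zz t ∂γz := fun ht =>
    Measure.bind_apply ht κ.measurable.aemeasurable
  have hγP : IsProbabilityMeasure γ := by
    constructor
    rw [hbind MeasurableSet.univ]
    simp
  refine ⟨γ, ⟨hγP, ?_, ?_⟩, ?_⟩
  · -- first marginal is p
    ext s hs
    rw [Measure.map_apply measurable_fst hs, hbind (measurable_fst hs)]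
    have h1 : ∀ zz : Z × Z, κ zz (Prod.fst ⁻¹' s) = η₁ zz.1 s := by
      intro zz
      have : (Prod.fst ⁻¹' s : Set ((X × Z) × (X × Z))) = s ×ˢ Set.univ := by
        ext y; simp
      rw [hκ_apply, this, Measure.prod_prod, measure_univ, mul_one]
    simp_rw [h1]
    rw [show (∫⁻ zz : Z × Z, η₁ zz.1 s ∂γz) = ∫⁻ z, η₁ z s ∂(γz.map Prod.fst) from
      (lintegral_map (η₁.measurable_coe hs) measurable_fst).symm, hγz1]
    rw [marginal_formula p hs]
    refine lintegral_congr fun z => ?_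
    rw [hη₁_apply, Measure.prod_dirac,
      Measure.map_apply measurable_prodMk_right hs]
    rfl
  · -- second marginal is q
    ext s hs
    rw [Measure.map_apply measurable_snd hs, hbind (measurable_snd hs)]
    have h1 : ∀ zz : Z × Z, κ zz (Prod.snd ⁻¹' s) = η₂ zz.2 s := by
      intro zz
      have : (Prod.snd ⁻¹' s : Set ((X × Z) × (X × Z))) = Set.univ ×ˢ s := by
        ext y; simp
      rw [hκ_apply, this, Measure.prod_prod, measure_univ, one_mul]
    simp_rw [h1]
    rw [show (∫⁻ zz : Z × Z, η₂ zz.2 s ∂γz) = ∫⁻ z, η₂ z s ∂(γz.map Prod.snd) from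
      (lintegral_map (η₂.measurable_coe hs) measurable_snd).symm, hγz2]
    rw [marginal_formula q hs]
    refine lintegral_congr fun z => ?_
    rw [hη₂_apply, Measure.prod_dirac,
      Measure.map_apply measurable_prodMk_right hs]
    rfl
  · -- latent marginal is γz
    have hπ : Measurable (fun y : (X × Z) × (X × Z) => (y.1.2, y.2.2)) :=
      (measurable_snd.comp measurable_fst).prodMk (measurable_snd.comp measurable_snd)
    ext s hs
    rw [Measure.map_apply hπ hs, hbind (hπ hs)]
    have h1 : ∀ zz : Z × Z, κ zz ((fun y : (X × Z) × (X × Z) => (y.1.2, y.2.2)) ⁻¹' s)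
        = Measure.dirac zz s := by
      intro zz
      have hmap : ((η₁ zz.1).prod (η₂ zz.2)).map
          (Prod.map (Prod.snd : X × Z → Z) (Prod.snd : X × Z → Z)) = Measure.dirac zz := by
        rw [← Measure.map_prod_map _ _ measurable_snd measurable_snd,
          hη₁_apply, hη₂_apply, Measure.map_snd_prod, Measure.map_snd_prod]
        simp [Measure.dirac_prod_dirac]
      calc κ zz ((fun y : (X × Z) × (X × Z) => (y.1.2, y.2.2)) ⁻¹' s)
          = (η₁ zz.1).prod (η₂ zz.2)
            (Prod.map (Prod.snd : X × Z → Z) (Prod.snd : X × Z → Z) ⁻¹' s) := by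
            rw [hκ_apply]; rfl
        _ = ((η₁ zz.1).prod (η₂ zz.2)).map
            (Prod.map (Prod.snd : X × Z → Z) (Prod.snd : X × Z → Z)) s :=
            (Measure.map_apply (measurable_snd.prodMap measurable_snd) hs).symm
        _ = Measure.dirac zz s := by rw [hmap]
    simp_rw [h1]
    simp_rw [Measure.dirac_apply' _ hs]
    rw [lintegral_indicator_one hs]

end Aux

/-- **Decomposition of the Wasserstein-autoencoder objective.** For standard Borel `X, Z`,
probability measures `p, q` on `X × Z`, bounded measurable `c_x : X × Z → ℝ`, bounded
measurable nonnegative latent cost `C_z : Z × Z → ℝ`, and `λ ≥ 0`: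
`inf_{γ ∈ Γ[p,q]} ∫ [c_x(x₂,z₂) + λ C_z(z₁,z₂)] dγ
  = ∫ c_x dq + λ · inf_{γ_z ∈ Γ[p_z,q_z]} ∫ C_z dγ_z`. -/
theorem wasserstein_autoencoder_decomposition
    {X Z : Type*} [MeasurableSpace X] [StandardBorelSpace X]
    [MeasurableSpace Z] [StandardBorelSpace Z]
    (p q : Measure (X × Z)) [IsProbabilityMeasure p] [IsProbabilityMeasure q]
    (c_x : X × Z → ℝ) (hc_meas : Measurable c_x) (M_x : ℝ) (hc_bdd : ∀ y, |c_x y| ≤ M_x)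
    (C_z : Z × Z → ℝ) (hCz_meas : Measurable C_z) (M_z : ℝ) (hCz_bdd : ∀ y, |C_z y| ≤ M_z)
    (hCz_nonneg : ∀ z₁ z₂ : Z, 0 ≤ C_z (z₁, z₂))
    (lam : ℝ) (hlam : 0 ≤ lam) :
    sInf {r : ℝ | ∃ γ ∈ couplings p q,
        r = ∫ y : (X × Z) × (X × Z), (c_x y.2 + lam * C_z (y.1.2, y.2.2)) ∂γ}
      = (∫ y : X × Z, c_x y ∂q)
        + lam * sInf {r : ℝ | ∃ γz ∈ couplings (p.map Prod.snd) (q.map Prod.snd),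
            r = ∫ z : Z × Z, C_z z ∂γz} := by
  haveI hpz : IsProbabilityMeasure (p.map (Prod.snd : X × Z → Z)) :=
    Measure.isProbabilityMeasure_map measurable_snd.aemeasurable
  haveI hqz : IsProbabilityMeasure (q.map (Prod.snd : X × Z → Z)) :=
    Measure.isProbabilityMeasure_map measurable_snd.aemeasurable
  have hπ : Measurable (fun y : (X × Z) × (X × Z) => (y.1.2, y.2.2)) :=
    (measurable_snd.comp measurable_fst).prodMk (measurable_snd.comp measurable_snd)
  set I : ℝ := ∫ y : X × Z, c_x y ∂q with hI
  set B : Set ℝ := {r : ℝ | ∃ γz ∈ couplings (p.map Prod.snd) (q.map Prod.snd),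
      r = ∫ z : Z × Z, C_z z ∂γz} with hB
  -- the value of the objective on any coupling
  have hval : ∀ γ : Measure ((X × Z) × (X × Z)), IsProbabilityMeasure γ →
      γ.map Prod.snd = q →
      (∫ y : (X × Z) × (X × Z), (c_x y.2 + lam * C_z (y.1.2, y.2.2)) ∂γ)
        = I + lam * ∫ z : Z × Z, C_z z ∂(γ.map (fun y => (y.1.2, y.2.2))) := by
    intro γ hγP hγ2
    haveI := hγP
    have hint1 : Integrable (fun y : (X × Z) × (X × Z) => c_x y.2) γ :=
      integrable_of_bdd γ (hc_meas.comp measurable_snd) M_x (fun y => hc_bdd y.2)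
    have hint2 : Integrable (fun y : (X × Z) × (X × Z) => C_z (y.1.2, y.2.2)) γ :=
      integrable_of_bdd γ (hCz_meas.comp hπ) M_z (fun y => hCz_bdd _)
    rw [integral_add hint1 (hint2.const_mul lam), integral_const_mul]
    congr 1
    · rw [hI, ← hγ2, integral_map measurable_snd.aemeasurable hc_meas.aestronglyMeasurable]
    · rw [integral_map hπ.aemeasurable hCz_meas.aestronglyMeasurable]
  -- the set of objective values is the affine image of the latent set
  have hset : {r : ℝ | ∃ γ ∈ couplings p q,
        r = ∫ y : (X × Z) × (X × Z), (c_x y.2 + lam * C_z (y.1.2, y.2.2)) ∂γ}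
      = (fun r => I + lam * r) '' B := by
    ext r
    constructor
    · rintro ⟨γ, ⟨hγP, hγ1, hγ2⟩, rfl⟩
      haveI := hγP
      refine ⟨∫ z : Z × Z, C_z z ∂(γ.map (fun y => (y.1.2, y.2.2))),
        ⟨γ.map (fun y => (y.1.2, y.2.2)), ⟨Measure.isProbabilityMeasure_map hπ.aemeasurable, ?_, ?_⟩,
          rfl⟩, (hval γ hγP hγ2).symm⟩
      · rw [Measure.map_map measurable_fst hπ,
          show (Prod.fst ∘ fun y : (X × Z) × (X × Z) => (y.1.2, y.2.2))
            = Prod.snd ∘ Prod.fst from rfl,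
          ← Measure.map_map measurable_snd measurable_fst, hγ1]
      · rw [Measure.map_map measurable_snd hπ,
          show (Prod.snd ∘ fun y : (X × Z) × (X × Z) => (y.1.2, y.2.2))
            = Prod.snd ∘ Prod.snd from rfl,
          ← Measure.map_map measurable_snd measurable_snd, hγ2]
    · rintro ⟨r', ⟨γz, hγz, rfl⟩, rfl⟩
      obtain ⟨γ, hγmem, hγπ⟩ := gluing p q hγz
      exact ⟨γ, hγmem, by rw [hval γ hγmem.1 hγmem.2.2, hγπ]⟩
  have hne : B.Nonempty := by
    refine ⟨∫ z : Z × Z, C_z z ∂((p.map Prod.snd).prod (q.map Prod.snd)),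
      (p.map Prod.snd).prod (q.map Prod.snd), ⟨inferInstance, ?_, ?_⟩, rfl⟩
    · simp
    · simp
  have hbdd : BddBelow B := by
    refine ⟨0, ?_⟩
    rintro r ⟨γz, hγz, rfl⟩
    exact integral_nonneg fun z => hCz_nonneg z.1 z.2
  have hmono : Monotone (fun r : ℝ => I + lam * r) :=
    fun a b h => add_le_add_right (mul_le_mul_of_nonneg_left h hlam) I
  have hcont : ContinuousAt (fun r : ℝ => I + lam * r) (sInf B) :=
    (continuous_const.add (continuous_mul_left lam)).continuousAt
  rw [hset, ← hmono.map_csInf_of_continuousAt hcont hne hbdd]
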